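/- arXiv:1603.03910 — 10 statements merged into one kernel-verified Lean document; each statement's English description precedes it below -/
import Mathlib

section
/- The elements 1, r, r^2, r^3 form a basis of Z/2[r] as a free module over the subring Z/2[G], where G = r^4 + r^3. -/
open Polynomial

private lemma gpoly_monic : (X ^ 4 + X ^ 3 : Polynomial (ZMod 2)).Monic := by
  monicity!

private lemma gpoly_natDegree : (X ^ 4 + X ^ 3 : Polynomial (ZMod 2)).natDegree = 4 := by
  compute_degree!

private lemma mem_span_pows (p : Polynomial (ZMod 2)) :
    p ∈ Submodule.span (Algebra.adjoin (ZMod 2) {(X ^ 4 + X ^ 3 : Polynomial (ZMod 2))})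
      (Set.range fun i : Fin 4 => (X : Polynomial (ZMod 2)) ^ (i : ℕ)) := by
  set A := Algebra.adjoin (ZMod 2) {(X ^ 4 + X ^ 3 : Polynomial (ZMod 2))} with hA
  generalize hn : p.natDegree = n
  induction n using Nat.strong_induction_on generalizing p with
  | _ n ih =>
  by_cases h4 : p.natDegree < 4
  · rw [p.as_sum_range' 4 h4]
    apply Submodule.sum_mem
    intro i hi
    have hiv : (X : Polynomial (ZMod 2)) ^ i ∈
        Set.range fun j : Fin 4 => (X : Polynomial (ZMod 2)) ^ (j : ℕ) :=
      ⟨⟨i, Finset.mem_range.mp hi⟩, rfl⟩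
    have : (monomial i) (p.coeff i) =
        (algebraMap (ZMod 2) A (p.coeff i)) • (X : Polynomial (ZMod 2)) ^ i := by
      rw [Subalgebra.smul_def]
      simp [Algebra.smul_def, ← Polynomial.C_mul_X_pow_eq_monomial]
    rw [this]
    exact Submodule.smul_mem _ _ (Submodule.subset_span hiv)
  · push_neg at h4
    have hmonic := gpoly_monic
    have hdvd := p.modByMonic_add_div (X ^ 4 + X ^ 3)
    have hrem : (p %ₘ (X ^ 4 + X ^ 3)).natDegree < 4 := by
      have := p.natDegree_modByMonic_lt hmonic (by
        intro h
        have := congrArg Polynomial.natDegree h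
        rw [gpoly_natDegree] at this
        simp at this)
      rwa [gpoly_natDegree] at this
    have hq : (p /ₘ (X ^ 4 + X ^ 3)).natDegree = p.natDegree - 4 := by
      rw [p.natDegree_divByMonic hmonic, gpoly_natDegree]
    have hqmem : (p /ₘ (X ^ 4 + X ^ 3)) ∈ Submodule.span A
        (Set.range fun i : Fin 4 => (X : Polynomial (ZMod 2)) ^ (i : ℕ)) := by
      exact ih ((p /ₘ (X ^ 4 + X ^ 3)).natDegree) (by omega) _ rfl
    have hrmem : (p %ₘ (X ^ 4 + X ^ 3)) ∈ Submodule.span A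
        (Set.range fun i : Fin 4 => (X : Polynomial (ZMod 2)) ^ (i : ℕ)) := by
      exact ih ((p %ₘ (X ^ 4 + X ^ 3)).natDegree) (by omega) _ rfl
    have hGA : (X ^ 4 + X ^ 3 : Polynomial (ZMod 2)) ∈ A :=
      Algebra.self_mem_adjoin_singleton _ _
    have hmul : (X ^ 4 + X ^ 3 : Polynomial (ZMod 2)) * (p /ₘ (X ^ 4 + X ^ 3)) =
        (⟨_, hGA⟩ : A) • (p /ₘ (X ^ 4 + X ^ 3)) := by
      rw [Subalgebra.smul_def]; rfl
    rw [← hdvd, hmul]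
    exact Submodule.add_mem _ hrmem (Submodule.smul_mem _ _ hqmem)

private lemma li_pows :
    LinearIndependent (Algebra.adjoin (ZMod 2) {(X ^ 4 + X ^ 3 : Polynomial (ZMod 2))})
      (fun i : Fin 4 => (X : Polynomial (ZMod 2)) ^ (i : ℕ)) := by
  rw [Fintype.linearIndependent_iff]
  intro g hg
  by_contra hne
  push_neg at hne
  obtain ⟨i0, hi0⟩ := hne
  have hq : ∀ i : Fin 4, ∃ q : Polynomial (ZMod 2),
      q.comp (X ^ 4 + X ^ 3) = (g i : Polynomial (ZMod 2)) := by
    intro i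
    have heq := Algebra.adjoin_singleton_eq_range_aeval (ZMod 2)
      (X ^ 4 + X ^ 3 : Polynomial (ZMod 2))
    have hmem : (↑(g i) : Polynomial (ZMod 2)) ∈
        (aeval (X ^ 4 + X ^ 3 : Polynomial (ZMod 2)) :
          Polynomial (ZMod 2) →ₐ[ZMod 2] Polynomial (ZMod 2)).range := heq ▸ (g i).2
    obtain ⟨q, hq⟩ := hmem
    exact ⟨q, by simpa [aeval_def, comp, eval₂_def] using hq⟩
  choose q hqc using hq
  set d : Fin 4 → ℕ := fun i => (q i).natDegree * 4 + (i : ℕ) with hd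
  set T : Finset (Fin 4) := Finset.univ.filter (fun i => g i ≠ 0) with hT
  have hTne : T.Nonempty := ⟨i0, by simp [hT, hi0]⟩
  obtain ⟨i, hiT, hmax⟩ := T.exists_max_image d hTne
  have hgi : g i ≠ 0 := by simpa [hT] using hiT
  have hgiP : (g i : Polynomial (ZMod 2)) ≠ 0 := by
    simpa [ZeroMemClass.coe_eq_zero] using hgi
  -- degrees of the coerced values
  have hdeg : ∀ j : Fin 4, ((g j : Polynomial (ZMod 2))).natDegree = (q j).natDegree * 4 := by
    intro j
    rw [← hqc j, natDegree_comp, gpoly_natDegree]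
  -- look at the coefficient of the sum at d i
  have hco := congrArg (fun p : Polynomial (ZMod 2) => p.coeff (d i)) hg
  simp only [Polynomial.finset_sum_coeff, coeff_zero] at hco
  have hterm : ∀ j : Fin 4, (g j • (X : Polynomial (ZMod 2)) ^ (j : ℕ)).coeff (d i) =
      if (j : ℕ) ≤ d i then ((g j : Polynomial (ZMod 2))).coeff (d i - j) else 0 := by
    intro j
    rw [Subalgebra.smul_def, smul_eq_mul, coeff_mul_X_pow']
  have hzero : ∀ j : Fin 4, j ≠ i →
      (g j • (X : Polynomial (ZMod 2)) ^ (j : ℕ)).coeff (d i) = 0 := by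
    intro j hji
    rw [hterm]
    by_cases hgj : g j = 0
    · simp [hgj]
    · have hjT : j ∈ T := by simp [hT, hgj]
      have hle : d j ≤ d i := hmax j hjT
      have hne' : d j ≠ d i := by
        intro h
        have h1 : d j % 4 = (j : ℕ) := by
          simp [hd, Nat.mul_add_mod', Nat.mod_eq_of_lt j.isLt]
        have h2 : d i % 4 = (i : ℕ) := by
          simp [hd, Nat.mul_add_mod', Nat.mod_eq_of_lt i.isLt]
        apply hji
        apply Fin.ext
        rw [← h1, ← h2, h]
      have hlt : d j < d i := lt_of_le_of_ne hle hne'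
      have hjd : (j : ℕ) ≤ d i := le_trans (Nat.le_add_left _ _) hle
      rw [if_pos hjd]
      apply coeff_eq_zero_of_natDegree_lt
      rw [hdeg j]
      simp only [hd] at hlt ⊢
      omega
  rw [Fintype.sum_eq_single i hzero, hterm] at hco
  have hii : (i : ℕ) ≤ d i := Nat.le_add_left _ _
  rw [if_pos hii] at hco
  have hdi : d i - (i : ℕ) = ((g i : Polynomial (ZMod 2))).natDegree := by
    rw [hdeg i]; simp [hd]
  rw [hdi, coeff_natDegree] at hco
  exact hgiP (leadingCoeff_eq_zero.mp hco)

theorem stmt1 :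
    ∃ b : Module.Basis (Fin 4)
      (Algebra.adjoin (ZMod 2) {(X ^ 4 + X ^ 3 : Polynomial (ZMod 2))})
      (Polynomial (ZMod 2)),
      ∀ i : Fin 4, b i = X ^ (i : ℕ) := by
  refine ⟨Module.Basis.mk li_pows (fun p _ => mem_span_pows p), fun i => ?_⟩
  simp [Module.Basis.mk_apply]
end

section
/- Let U : Z/2[r] → Z/2[r] be the unique Z/2-linear map satisfying U(G·f) = F·U(f) for all f, and sending 1, r, r^2, r^3 to 1, r, r^2, r^3 + r^2 + r respectively (where F = r(r+1)^3 and G = r^3(r+1)). Then U(f^2) = (U(f))^2 for all f in Z/2[r]. -/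
open Polynomial

noncomputable def Fpoly : Polynomial (ZMod 2) := X * (X + 1) ^ 3

noncomputable def useq : ℕ → Polynomial (ZMod 2)
  | 0 => 1
  | 1 => X
  | 2 => X ^ 2
  | 3 => X ^ 3 + X ^ 2 + X
  | (n + 4) => useq (n + 3) + Fpoly * useq n

lemma htwo : (2 : Polynomial (ZMod 2)) = 0 := by
  have := CharP.cast_eq_zero (Polynomial (ZMod 2)) 2
  simpa using this

lemma sq_add2 (p q : Polynomial (ZMod 2)) : (p + q) ^ 2 = p ^ 2 + q ^ 2 := by
  linear_combination (p * q) * htwo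

lemma useq_der (n : ℕ) : useq (n + 8) = useq (n + 6) + Fpoly ^ 2 * useq n := by
  have e1 : useq (n + 8) = useq (n + 7) + Fpoly * useq (n + 4) := rfl
  have e2 : useq (n + 7) = useq (n + 6) + Fpoly * useq (n + 3) := rfl
  have e3 : useq (n + 4) = useq (n + 3) + Fpoly * useq n := rfl
  rw [e1, e2, e3]
  linear_combination (Fpoly * useq (n + 3)) * htwo

lemma useq_sq : ∀ n, useq (2 * n) = useq n ^ 2 := by
  intro n
  induction n using Nat.strong_induction_on with
  | _ n ih =>
    match n with
    | 0 => simp [useq]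
    | 1 => show (X:Polynomial (ZMod 2))^2 = X^2; rfl
    | 2 => show useq 4 = (X^2:Polynomial (ZMod 2))^2
           show useq 3 + Fpoly * useq 0 = _
           simp only [useq, Fpoly]
           linear_combination (2*X^3+2*X^2+X : Polynomial (ZMod 2)) * htwo
    | 3 => show useq 6 = ((X:Polynomial (ZMod 2))^3+X^2+X)^2
           have e1 : useq 6 = useq 5 + Fpoly * useq 2 := rfl
           have e2 : useq 5 = useq 4 + Fpoly * useq 1 := rfl
           have e3 : useq 4 = useq 3 + Fpoly * useq 0 := rfl
           rw [e1, e2, e3]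
           simp only [useq, Fpoly]
           linear_combination (X^5+2*X^4+3*X^3+2*X^2+X : Polynomial (ZMod 2)) * htwo
    | (n + 4) =>
           have h8 : 2 * (n + 4) = 2 * n + 8 := by ring
           have h6 : 2 * n + 6 = 2 * (n + 3) := by ring
           rw [h8, useq_der, h6, ih (n + 3) (by omega), ih n (by omega)]
           have : useq (n + 4) = useq (n + 3) + Fpoly * useq n := rfl
           rw [this, sq_add2, mul_pow]

theorem stmt2 (U : Polynomial (ZMod 2) →ₗ[ZMod 2] Polynomial (ZMod 2))
    (hsemi : ∀ f, U (X ^ 3 * (X + 1) * f) = X * (X + 1) ^ 3 * U f)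
    (h0 : U 1 = 1) (h1 : U X = X) (h2 : U (X ^ 2) = X ^ 2)
    (h3 : U (X ^ 3) = X ^ 3 + X ^ 2 + X) :
    ∀ f, U (f ^ 2) = (U f) ^ 2 := by
  have hu : ∀ n, U (X ^ n) = useq n := by
    intro n
    induction n using Nat.strong_induction_on with
    | _ n ih =>
      match n with
      | 0 => simpa [useq] using h0
      | 1 => simpa [useq] using h1
      | 2 => simpa [useq] using h2
      | 3 => simpa [useq] using h3
      | (n + 4) =>
        have key : (X : Polynomial (ZMod 2)) ^ (n + 4)
            = X ^ 3 * (X + 1) * X ^ n + X ^ (n + 3) := by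
          linear_combination ((X:Polynomial (ZMod 2)) ^ (n + 3) - 2 * (X ^ 3 * X ^ n)) * htwo
        rw [key, map_add, hsemi, ih (n + 3) (by omega), ih n (by omega)]
        have : useq (n + 4) = useq (n + 3) + Fpoly * useq n := rfl
        rw [this, Fpoly]
        ring
  intro f
  induction f using Polynomial.induction_on' with
  | add p q hp hq =>
      rw [sq_add2, map_add, map_add, hp, hq, sq_add2]
  | monomial n a =>
      have ha : a ^ 2 = a := by revert a; decide
      rw [← C_mul_X_pow_eq_monomial, ← smul_eq_C_mul]
      have e : (a • (X : Polynomial (ZMod 2)) ^ n) ^ 2 = a • X ^ (2 * n) := by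
        rw [_root_.smul_pow, ha, ← pow_mul, Nat.mul_comm n 2]
      rw [e, map_smul, map_smul, hu, hu, useq_sq, _root_.smul_pow, ha]
end

section
/- With U as defined, U(r^{n+4}) = U(r^{n+3}) + (r^4 + r^3 + r^2 + r)·U(r^n) for all n ≥ 0. -/
open Polynomial

theorem stmt3 (U : Polynomial (ZMod 2) →ₗ[ZMod 2] Polynomial (ZMod 2))
    (hsemi : ∀ f, U (X ^ 3 * (X + 1) * f) = X * (X + 1) ^ 3 * U f)
    (h0 : U 1 = 1) (h1 : U X = X) (h2 : U (X ^ 2) = X ^ 2)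
    (h3 : U (X ^ 3) = X ^ 3 + X ^ 2 + X) :
    ∀ n : ℕ, U (X ^ (n + 4)) = U (X ^ (n + 3)) + (X ^ 4 + X ^ 3 + X ^ 2 + X) * U (X ^ n) := by
  have htwo : (2 : Polynomial (ZMod 2)) = 0 := by
    rw [show (2 : Polynomial (ZMod 2)) = C 2 from (map_ofNat C 2).symm,
      show (2 : ZMod 2) = 0 from rfl, map_zero]
  intro n
  have key : (X : Polynomial (ZMod 2)) ^ (n + 4) = X ^ (n + 3) + X ^ 3 * (X + 1) * X ^ n := by
    linear_combination -(X : Polynomial (ZMod 2)) ^ (n + 3) * htwo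
  rw [key, map_add, hsemi]
  have hF : (X : Polynomial (ZMod 2)) * (X + 1) ^ 3 = X ^ 4 + X ^ 3 + X ^ 2 + X := by
    linear_combination ((X : Polynomial (ZMod 2)) ^ 3 + X ^ 2) * htwo
  rw [hF]
end

section
/- For every n ≥ 0 there exists a polynomial A_n in Z/2[t] such that U((r^2 + r)·r^{2n}) = (r^2 + r)·A_n(r^2). -/
open Polynomial

theorem stmt4 (U : Polynomial (ZMod 2) →ₗ[ZMod 2] Polynomial (ZMod 2))
    (hsemi : ∀ f, U (X ^ 3 * (X + 1) * f) = X * (X + 1) ^ 3 * U f)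
    (h0 : U 1 = 1) (h1 : U X = X) (h2 : U (X ^ 2) = X ^ 2)
    (h3 : U (X ^ 3) = X ^ 3 + X ^ 2 + X) :
    ∀ n : ℕ, ∃ A : Polynomial (ZMod 2),
      U ((X ^ 2 + X) * X ^ (2 * n)) = (X ^ 2 + X) * A.comp (X ^ 2) := by
  have htwo : (2 : Polynomial (ZMod 2)) = 0 := CharTwo.two_eq_zero
  -- the key recursion
  have hrec : ∀ m : ℕ, U (X ^ (m + 4)) = X * (X + 1) ^ 3 * U (X ^ m) + U (X ^ (m + 3)) := by
    intro m
    have h := hsemi (X ^ m)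
    have e1 : (X : Polynomial (ZMod 2)) ^ 3 * (X + 1) * X ^ m = X ^ (m + 4) + X ^ (m + 3) := by
      ring
    rw [e1, map_add] at h
    linear_combination h - U (X ^ (m + 3)) * htwo
  -- explicit small values
  have hP4 : U (X ^ 4) = X ^ 4 := by
    have h4 := hrec 0
    rw [pow_zero, h0, h3, mul_one] at h4
    rw [show (0 + 4 : ℕ) = 4 by norm_num] at h4
    rw [h4]
    linear_combination (2 * X ^ 3 + 2 * X ^ 2 + X) * htwo
  have hP5 : U (X ^ 5) = X ^ 5 + X ^ 3 + X ^ 2 := by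
    have h5 := hrec 1
    rw [pow_one, h1] at h5
    rw [show (1 + 4 : ℕ) = 5 by norm_num, show (1 + 3 : ℕ) = 4 by norm_num, hP4] at h5
    rw [h5]
    linear_combination (2 * X ^ 4 + X ^ 3) * htwo
  have hP6 : U (X ^ 6) = X ^ 6 + X ^ 4 + X ^ 2 := by
    have h6 := hrec 2
    rw [h2] at h6
    rw [show (2 + 4 : ℕ) = 6 by norm_num, show (2 + 3 : ℕ) = 5 by norm_num, hP5] at h6
    rw [h6]
    linear_combination (2 * X ^ 5 + X ^ 4 + X ^ 3) * htwo
  -- the main strengthened induction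
  have main : ∀ n : ℕ, (∃ C : Polynomial (ZMod 2), U (X ^ (2 * n)) = C.comp (X ^ 2)) ∧
      (∃ A : Polynomial (ZMod 2),
        U (X ^ (2 * n + 2)) + U (X ^ (2 * n + 1)) = (X ^ 2 + X) * A.comp (X ^ 2)) := by
    intro n
    induction n using Nat.strong_induction_on with
    | _ n ih =>
      match n with
      | 0 =>
        constructor
        · refine ⟨1, ?_⟩
          rw [show (2 * 0 : ℕ) = 0 by norm_num, pow_zero, h0, one_comp]
        · refine ⟨1, ?_⟩
          rw [show (2 * 0 + 2 : ℕ) = 2 by norm_num, show (2 * 0 + 1 : ℕ) = 1 by norm_num,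
            pow_one, h2, h1, one_comp, mul_one]
      | 1 =>
        constructor
        · refine ⟨X, ?_⟩
          rw [show (2 * 1 : ℕ) = 2 by norm_num, h2, X_comp]
        · refine ⟨X + 1, ?_⟩
          rw [show (2 * 1 + 2 : ℕ) = 4 by norm_num, show (2 * 1 + 1 : ℕ) = 3 by norm_num,
            hP4, h3]
          simp only [add_comp, X_comp, one_comp]
          ring
      | 2 =>
        constructor
        · refine ⟨X ^ 2, ?_⟩
          rw [show (2 * 2 : ℕ) = 4 by norm_num, hP4]
          simp only [pow_comp, X_comp]
          ring
        · refine ⟨X ^ 2 + X, ?_⟩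
          rw [show (2 * 2 + 2 : ℕ) = 6 by norm_num, show (2 * 2 + 1 : ℕ) = 5 by norm_num,
            hP6, hP5]
          simp only [add_comp, pow_comp, X_comp]
          linear_combination (X ^ 2) * htwo
      | (k + 3) =>
        obtain ⟨C2, hC2⟩ := (ih (k + 2) (by omega)).1
        obtain ⟨A0, hA0⟩ := (ih k (by omega)).2
        constructor
        · refine ⟨C2 + (X ^ 2 + X) * (X + 1) * A0, ?_⟩
          have e1 := hrec (2 * k + 2)
          have e2 := hrec (2 * k + 1)
          rw [show (2 * k + 1 + 4 : ℕ) = 2 * k + 2 + 3 by ring,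
            show (2 * k + 1 + 3 : ℕ) = 2 * (k + 2) by ring, hC2] at e2
          rw [show (2 * (k + 3) : ℕ) = 2 * k + 2 + 4 by ring, e1, e2]
          simp only [add_comp, mul_comp, X_comp, one_comp, pow_comp]
          linear_combination X * (X + 1) ^ 3 * hA0 +
            (2 * X ^ 5 + 2 * X ^ 4 + 2 * X ^ 3) * A0.comp (X ^ 2) * htwo
        · refine ⟨(X + 1) * C2, ?_⟩
          have e := hrec (2 * k + 4)
          have hC2' : U (X ^ (2 * k + 4)) = C2.comp (X ^ 2) := by
            rw [show (2 * k + 4 : ℕ) = 2 * (k + 2) by ring]; exact hC2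
          rw [hC2'] at e
          rw [show (2 * (k + 3) + 2 : ℕ) = 2 * k + 4 + 4 by ring,
            show (2 * (k + 3) + 1 : ℕ) = 2 * k + 4 + 3 by ring, e]
          simp only [mul_comp, add_comp, X_comp, one_comp]
          linear_combination ((X ^ 3 + X ^ 2) * C2.comp (X ^ 2) + U (X ^ (2 * k + 4 + 3))) * htwo
  intro n
  obtain ⟨A, hA⟩ := (main n).2
  refine ⟨A, ?_⟩
  have e : ((X : Polynomial (ZMod 2)) ^ 2 + X) * X ^ (2 * n) =
      X ^ (2 * n + 2) + X ^ (2 * n + 1) := by ring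
  rw [e, map_add, hA]
end

section
/- The polynomials A_n in Z/2[t] defined by U((r^2+r)·r^{2n}) = (r^2+r)·A_n(r^2) satisfy the recurrence A_{n+4} = A_{n+3} + (t^4 + t^3 + t^2 + t)·A_n, with A_0 = 1, A_1 = t+1, A_2 = t^2 + t, A_3 = t^3 + t^2. -/
open Polynomial

theorem stmt5 (U : Polynomial (ZMod 2) →ₗ[ZMod 2] Polynomial (ZMod 2))
    (hsemi : ∀ f, U (X ^ 3 * (X + 1) * f) = X * (X + 1) ^ 3 * U f)
    (h0 : U 1 = 1) (h1 : U X = X) (h2 : U (X ^ 2) = X ^ 2)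
    (h3 : U (X ^ 3) = X ^ 3 + X ^ 2 + X)
    (A : ℕ → Polynomial (ZMod 2))
    (hA : ∀ n, U ((X ^ 2 + X) * X ^ (2 * n)) = (X ^ 2 + X) * (A n).comp (X ^ 2)) :
    (∀ n, A (n + 4) = A (n + 3) + (X ^ 4 + X ^ 3 + X ^ 2 + X) * A n) ∧
    A 0 = 1 ∧ A 1 = X + 1 ∧ A 2 = X ^ 2 + X ∧ A 3 = X ^ 3 + X ^ 2 := by
  have htwo : (2 : Polynomial (ZMod 2)) = 0 := by
    rw [← map_ofNat (C : ZMod 2 →+* Polynomial (ZMod 2)) 2,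
      show (2 : ZMod 2) = 0 from rfl, map_zero]
  have cancel : ∀ p q : Polynomial (ZMod 2),
      (X ^ 2 + X) * p.comp (X ^ 2) = (X ^ 2 + X) * q.comp (X ^ 2) → p = q := by
    intro p q h
    have hne : (X ^ 2 + X : Polynomial (ZMod 2)) ≠ 0 := by
      intro hc
      have := congrArg (fun f => Polynomial.coeff f 2) hc
      simp [coeff_X] at this
    have h' : p.comp (X ^ 2) = q.comp (X ^ 2) := mul_left_cancel₀ hne h
    exact Polynomial.expand_injective (R := ZMod 2) (n := 2) (by norm_num)
      (by rwa [Polynomial.expand_eq_comp_X_pow, Polynomial.expand_eq_comp_X_pow])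
  have hU4 : U (X ^ 4 + X ^ 3) = X * (X + 1) ^ 3 := by
    have := hsemi 1
    rw [mul_one, h0, mul_one] at this
    rw [show (X : Polynomial (ZMod 2)) ^ 4 + X ^ 3 = X ^ 3 * (X + 1) by ring]
    exact this
  have h4 : U (X ^ 4) = X ^ 4 := by
    have hh := hU4
    rw [map_add, h3] at hh
    linear_combination hh + (X ^ 3 + X ^ 2 : Polynomial (ZMod 2)) * htwo
  refine ⟨?_, ?_, ?_, ?_, ?_⟩
  · intro n
    have key : ((X : Polynomial (ZMod 2)) ^ 2 + X) * X ^ (2 * (n + 4))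
        = X ^ 3 * (X + 1) * (X ^ 3 * (X + 1) * ((X ^ 2 + X) * X ^ (2 * n)))
          + (X ^ 2 + X) * X ^ (2 * (n + 3)) := by
      linear_combination (-(X : Polynomial (ZMod 2)) ^ 7 * ((X ^ 2 + X) * X ^ (2 * n))
        - (X ^ 2 + X) * X ^ (2 * (n + 3))) * htwo
    refine cancel _ _ ?_
    rw [← hA (n + 4), key, map_add, hsemi, hsemi, hA, hA]
    simp only [add_comp, mul_comp, X_pow_comp, X_comp, pow_comp]
    linear_combination ((X : Polynomial (ZMod 2)) ^ 2 + X) * (A n).comp (X ^ 2)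
      * (3 * X ^ 7 + 7 * X ^ 6 + 10 * X ^ 5 + 7 * X ^ 4 + 3 * X ^ 3) * htwo
  · refine cancel (A 0) 1 ?_
    rw [← hA 0, show ((X : Polynomial (ZMod 2)) ^ 2 + X) * X ^ (2 * 0) = X ^ 2 + X by ring,
      map_add, h1, h2, one_comp, mul_one]
  · refine cancel (A 1) (X + 1) ?_
    rw [← hA 1, show ((X : Polynomial (ZMod 2)) ^ 2 + X) * X ^ (2 * 1) = X ^ 4 + X ^ 3 by ring,
      hU4]
    simp only [add_comp, X_comp, one_comp]
    linear_combination ((X : Polynomial (ZMod 2)) ^ 3 + X ^ 2) * htwo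
  · refine cancel (A 2) (X ^ 2 + X) ?_
    rw [← hA 2,
      show ((X : Polynomial (ZMod 2)) ^ 2 + X) * X ^ (2 * 2) = X ^ 3 * (X + 1) * X ^ 2 by ring,
      hsemi, h2]
    simp only [add_comp, X_comp, pow_comp, X_pow_comp]
    linear_combination ((X : Polynomial (ZMod 2)) ^ 5 + X ^ 4) * htwo
  · refine cancel (A 3) (X ^ 3 + X ^ 2) ?_
    rw [← hA 3,
      show ((X : Polynomial (ZMod 2)) ^ 2 + X) * X ^ (2 * 3) = X ^ 3 * (X + 1) * X ^ 4 by ring,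
      hsemi, h4]
    simp only [add_comp, X_comp, pow_comp, X_pow_comp]
    linear_combination ((X : Polynomial (ZMod 2)) ^ 7 + X ^ 6) * htwo
end

section
/- Define C_n in Z/2[t] by C_0 = 0, C_1 = 1, C_2 = t, C_3 = t^2, and C_{n+4} = C_{n+3} + (t^4 + t^3 + t^2 + t)·C_n + t^n·(t^2 + t). Then (U + I)((r^2+r)·r^{2n}) = (r^2+r)·C_n(r^2) for all n ≥ 0. -/
open Polynomial

theorem stmt6 (U : Polynomial (ZMod 2) →ₗ[ZMod 2] Polynomial (ZMod 2))
    (hsemi : ∀ f, U (X ^ 3 * (X + 1) * f) = X * (X + 1) ^ 3 * U f)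
    (h0 : U 1 = 1) (h1 : U X = X) (h2 : U (X ^ 2) = X ^ 2)
    (h3 : U (X ^ 3) = X ^ 3 + X ^ 2 + X)
    (C : ℕ → Polynomial (ZMod 2))
    (hC0 : C 0 = 0) (hC1 : C 1 = 1) (hC2 : C 2 = X) (hC3 : C 3 = X ^ 2)
    (hrec : ∀ n, C (n + 4) = C (n + 3) + (X ^ 4 + X ^ 3 + X ^ 2 + X) * C n + X ^ n * (X ^ 2 + X)) :
    ∀ n : ℕ, U ((X ^ 2 + X) * X ^ (2 * n)) + (X ^ 2 + X) * X ^ (2 * n)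
      = (X ^ 2 + X) * (C n).comp (X ^ 2) := by
  intro n
  induction n using Nat.strong_induction_on with
  | _ n ih =>
    match n with
    | 0 =>
      have e : ((X^2+X) * X^(2*0) : Polynomial (ZMod 2)) = X^2 + X := by ring
      rw [e, map_add, h2, h1, hC0, zero_comp]
      ring_nf; try reduce_mod_char
    | 1 =>
      have e : ((X^2+X) * X^(2*1) : Polynomial (ZMod 2)) = X^3*(X+1)*1 := by
        ring_nf; try reduce_mod_char
      rw [e, hsemi, h0, hC1, one_comp]
      ring_nf; try reduce_mod_char
    | 2 =>
      have e : ((X^2+X) * X^(2*2) : Polynomial (ZMod 2)) = X^3*(X+1)*(X^2) := by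
        ring_nf; try reduce_mod_char
      rw [e, hsemi, h2, hC2, X_comp]
      ring_nf; try reduce_mod_char
    | 3 =>
      have e : ((X^2+X) * X^(2*3) : Polynomial (ZMod 2)) = X^3*(X+1)*(X^4) := by
        ring_nf; try reduce_mod_char
      have hX4 : U (X^4) = X^4 := by
        have e2 : (X^4 : Polynomial (ZMod 2)) = X^3*(X+1)*1 + X^3 := by
          ring_nf; try reduce_mod_char
        rw [e2, map_add, hsemi, h0, h3]
        ring_nf; try reduce_mod_char
      rw [e, hsemi, hX4, hC3, pow_comp, X_comp]
      ring_nf; try reduce_mod_char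
    | (m+4) =>
      have ih0 := ih m (by omega)
      have ih3 := ih (m+3) (by omega)
      have key : ((X^2+X) * X^(2*(m+4)) : Polynomial (ZMod 2))
          = X^3*(X+1)*(X^3*(X+1)*((X^2+X)*X^(2*m))) + (X^2+X)*X^(2*(m+3)) := by
        rw [show 2*(m+4) = 2*m + 8 by ring, show 2*(m+3) = 2*m + 6 by ring,
          pow_add, pow_add]
        ring_nf; try reduce_mod_char
      have hU : U ((X^2+X) * X^(2*(m+4)))
          = X*(X+1)^3*(X*(X+1)^3 * U ((X^2+X)*X^(2*m))) + U ((X^2+X)*X^(2*(m+3))) := by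
        rw [key, map_add, hsemi, hsemi]
      rw [hU, hrec, key]
      simp only [add_comp, mul_comp, pow_comp, X_comp]
      rw [show 2*(m+3) = 2*m + 6 by ring, pow_add] at ih3 ⊢
      rw [show (X^(2*m) : Polynomial (ZMod 2)) = (X^2)^m by rw [pow_mul]] at ih0 ih3 ⊢
      linear_combination (norm := (ring_nf; reduce_mod_char)) (X*(X+1)^3)^2 * ih0 + ih3
end

section
/- Let C_n in Z/2[t] satisfy C_0 = 0, C_1 = 1, C_2 = t, C_3 = t^2, and C_{n+4} = C_{n+3} + (t^4 + t^3 + t^2 + t)·C_n + t^n·(t^2 + t). Then for n ≥ 1, the degree of C_n equals n - 1 if n is not divisible by 4, and is strictly less than n - 1 if n is divisible by 4. -/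
open Polynomial

theorem stmt7 (C : ℕ → Polynomial (ZMod 2))
    (hC0 : C 0 = 0) (hC1 : C 1 = 1) (hC2 : C 2 = X) (hC3 : C 3 = X ^ 2)
    (hrec : ∀ n, C (n + 4) = C (n + 3) + (X ^ 4 + X ^ 3 + X ^ 2 + X) * C n + X ^ n * (X ^ 2 + X)) :
    ∀ n : ℕ, 1 ≤ n →
      (¬ (4 ∣ n) → (C n).degree = ((n - 1 : ℕ) : WithBot ℕ)) ∧
      (4 ∣ n → (C n).degree < ((n - 1 : ℕ) : WithBot ℕ)) := by
  have hA : ((X:(ZMod 2)[X])^4 + X^3 + X^2 + X).degree = 4 := by compute_degree!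
  have hX2X : ((X:(ZMod 2)[X])^2 + X).degree = 2 := by compute_degree!
  have hone : ∀ a : ZMod 2, a ≠ 0 → a = 1 := by decide
  have key : ∀ n : ℕ,
      (¬ (4 ∣ n) → (C n).degree = ((n - 1 : ℕ) : WithBot ℕ)) ∧
      (4 ∣ n → (C n).degree < ((n - 1 : ℕ) : WithBot ℕ)) := by
    intro n
    induction n using Nat.strong_induction_on with
    | _ n ih =>
      match n with
      | 0 =>
        refine ⟨fun h => absurd ⟨0, rfl⟩ h, fun _ => ?_⟩
        rw [hC0, degree_zero]
        exact WithBot.bot_lt_coe _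
      | 1 =>
        refine ⟨fun _ => by rw [hC1]; simp, fun h => absurd h (by omega)⟩
      | 2 =>
        refine ⟨fun _ => by rw [hC2]; simp, fun h => absurd h (by omega)⟩
      | 3 =>
        refine ⟨fun _ => by rw [hC3]; simp, fun h => absurd h (by omega)⟩
      | (n+4) =>
        have ihn := ih n (by omega)
        have ihn3 := ih (n+3) (by omega)
        have hXn : ((X:(ZMod 2)[X])^n * (X^2+X)).degree = ((n+2:ℕ) : WithBot ℕ) := by
          rw [degree_mul, degree_X_pow, hX2X]
          push_cast
          rfl
        have hC3le : (C (n+3)).degree ≤ ((n+2:ℕ) : WithBot ℕ) := by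
          rcases em (4 ∣ (n+3)) with h | h
          · exact le_of_lt (ihn3.2 h)
          · exact le_of_eq (ihn3.1 h)
        rcases em (4 ∣ (n+4)) with hdvd | hdvd
        · -- divisible case
          have hdn : 4 ∣ n := by omega
          refine ⟨fun h => absurd hdvd h, fun _ => ?_⟩
          have hgoal : ((n+4-1 : ℕ) : WithBot ℕ) = ((n+3 : ℕ) : WithBot ℕ) := rfl
          rw [hgoal, hrec]
          have hAC : (((X:(ZMod 2)[X])^4 + X^3 + X^2 + X) * C n).degree < ((n+3:ℕ) : WithBot ℕ) := by
            rcases Nat.eq_zero_or_pos n with hn0 | hn0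
            · subst hn0
              rw [hC0, mul_zero, degree_zero]
              exact WithBot.bot_lt_coe _
            · have hn4 : 4 ≤ n := by omega
              rw [degree_mul, hA]
              have h1 : (C n).degree < ((n-1:ℕ) : WithBot ℕ) := ihn.2 hdn
              calc (4 : WithBot ℕ) + (C n).degree < 4 + ((n-1:ℕ) : WithBot ℕ) := by
                    exact WithBot.add_lt_add_left (by decide) h1
                _ = ((n+3:ℕ) : WithBot ℕ) := by
                    have : (4 : WithBot ℕ) = ((4:ℕ) : WithBot ℕ) := rfl
                    rw [this, ← Nat.cast_add]
                    congr 1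
                    omega
          have hd3 : (C (n+3)).degree = ((n+2:ℕ) : WithBot ℕ) := ihn3.1 (by omega)
          have hfirst : (C (n+3) + (X:(ZMod 2)[X])^n * (X^2+X)).degree < ((n+3:ℕ) : WithBot ℕ) := by
            have hsplit : C (n+3) + (X:(ZMod 2)[X])^n * (X^2+X)
                = (C (n+3) + X^(n+2)) + X^(n+1) := by ring
            rw [hsplit]
            have h1 : (C (n+3) + (X:(ZMod 2)[X])^(n+2)).degree < ((n+2:ℕ) : WithBot ℕ) := by
              have hne : C (n+3) ≠ 0 := by
                intro h0
                rw [h0, degree_zero] at hd3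
                exact absurd hd3.symm (by simp)
              have hlc : (C (n+3)).leadingCoeff = ((X:(ZMod 2)[X])^(n+2)).leadingCoeff := by
                rw [leadingCoeff_X_pow]
                exact hone _ (leadingCoeff_ne_zero.mpr hne)
              have heq : (C (n+3)).degree = ((X:(ZMod 2)[X])^(n+2)).degree := by
                rw [degree_X_pow, hd3]
              have := degree_sub_lt heq hne hlc
              rw [CharTwo.sub_eq_add] at this
              rw [hd3] at this
              exact this
            refine lt_of_le_of_lt (degree_add_le _ _) (max_lt ?_ ?_)
            · exact lt_trans h1 (by exact_mod_cast Nat.lt_succ_self (n+2))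
            · rw [degree_X_pow]
              exact_mod_cast (by omega : n + 1 < n + 3)
          calc (C (n+3) + ((X:(ZMod 2)[X])^4 + X^3 + X^2 + X) * C n + X^n * (X^2+X)).degree
              = ((C (n+3) + X^n * (X^2+X)) + ((X:(ZMod 2)[X])^4 + X^3 + X^2 + X) * C n).degree := by
                ring_nf
            _ < ((n+3:ℕ) : WithBot ℕ) :=
                lt_of_le_of_lt (degree_add_le _ _) (max_lt hfirst hAC)
        · -- not divisible
          have hndn : ¬ 4 ∣ n := by omega
          have hn1 : 1 ≤ n := by omega
          refine ⟨fun _ => ?_, fun h => absurd h hdvd⟩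
          have hdCn : (C n).degree = ((n-1:ℕ) : WithBot ℕ) := ihn.1 hndn
          have hAC : (((X:(ZMod 2)[X])^4 + X^3 + X^2 + X) * C n).degree = ((n+3:ℕ) : WithBot ℕ) := by
            rw [degree_mul, hA, hdCn]
            have : (4 : WithBot ℕ) = ((4:ℕ) : WithBot ℕ) := rfl
            rw [this, ← Nat.cast_add]
            congr 1
            omega
          have h1 : (C (n+3) + ((X:(ZMod 2)[X])^4 + X^3 + X^2 + X) * C n).degree = ((n+3:ℕ) : WithBot ℕ) := by
            rw [degree_add_eq_right_of_degree_lt, hAC]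
            rw [hAC]
            exact lt_of_le_of_lt hC3le (by exact_mod_cast Nat.lt_succ_self (n+2))
          have hgoal : ((n+4-1 : ℕ) : WithBot ℕ) = ((n+3 : ℕ) : WithBot ℕ) := rfl
          rw [hgoal, hrec]
          rw [degree_add_eq_left_of_degree_lt, h1]
          rw [h1, hXn]
          exact_mod_cast (by omega : n + 2 < n + 3)
  intro n _
  exact key n
end

section
/- With C_n as defined, if C_n is a Z/2-linear combination of the polynomials C_k with k < n, then 4 divides n. -/
open Polynomial

lemma deg_aux (C : ℕ → Polynomial (ZMod 2))
    (hC0 : C 0 = 0) (hC1 : C 1 = 1) (hC2 : C 2 = X) (hC3 : C 3 = X ^ 2)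
    (hrec : ∀ n, C (n + 4) = C (n + 3) + (X ^ 4 + X ^ 3 + X ^ 2 + X) * C n + X ^ n * (X ^ 2 + X)) :
    ∀ n : ℕ, (C n).natDegree ≤ n - 1 := by
  intro n
  induction n using Nat.strong_induction_on with
  | _ n ih =>
    match n with
    | 0 => simp [hC0]
    | 1 => simp [hC1]
    | 2 => simp [hC2]
    | 3 => simp [hC3]
    | 1 + 3 =>
      have h4 : C 4 = X := by
        have := hrec 0
        rw [hC0, hC3] at this
        rw [show (0:ℕ)+4 = 4 from rfl] at this
        rw [this, mul_zero, add_zero, pow_zero, one_mul, ← add_assoc,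
              CharTwo.add_self_eq_zero, zero_add]
      simpa [h4] using (by norm_num : (X : (ZMod 2)[X]).natDegree ≤ 3)
    | (m+2) + 3 =>
      have hm1 : 1 ≤ m + 1 := Nat.le_add_left 1 m
      rw [show m + 2 + 3 = (m+1) + 4 from by ring, hrec (m+1)]
      refine le_trans (natDegree_add_le _ _) ?_
      refine max_le (le_trans (natDegree_add_le _ _) (max_le ?_ ?_)) ?_
      · have := ih ((m+1)+3) (by omega)
        omega
      · refine le_trans (natDegree_mul_le) ?_
        have h1 : (X ^ 4 + X ^ 3 + X ^ 2 + X : (ZMod 2)[X]).natDegree ≤ 4 := by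
          compute_degree
        have h2 := ih (m+1) (by omega)
        omega
      · refine le_trans (natDegree_mul_le) ?_
        have h1 : (X ^ (m+1) : (ZMod 2)[X]).natDegree ≤ m+1 := natDegree_X_pow_le _
        have h2 : (X ^ 2 + X : (ZMod 2)[X]).natDegree ≤ 2 := by compute_degree
        omega

lemma top_aux (C : ℕ → Polynomial (ZMod 2))
    (hC0 : C 0 = 0) (hC1 : C 1 = 1) (hC2 : C 2 = X) (hC3 : C 3 = X ^ 2)
    (hrec : ∀ n, C (n + 4) = C (n + 3) + (X ^ 4 + X ^ 3 + X ^ 2 + X) * C n + X ^ n * (X ^ 2 + X)) :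
    ∀ n : ℕ, ¬ (4 ∣ (n+1)) → (C (n+1)).coeff n = 1 := by
  have hdeg := deg_aux C hC0 hC1 hC2 hC3 hrec
  intro n
  induction n using Nat.strong_induction_on with
  | _ n ih =>
    match n with
    | 0 => intro _; simp [hC1]
    | 1 => intro _; simp [hC2]
    | 2 => intro _; simp [hC3]
    | 3 => intro h; exact absurd ⟨1, rfl⟩ h
    | (m+4) =>
      intro h
      have h' : ¬ (4 ∣ (m+1)) := by omega
      have key := ih m (by omega) h'
      rw [show m + 4 + 1 = (m+1) + 4 from by ring, hrec (m+1)]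
      have hz : ∀ k, m + 1 ≤ k → (C (m+1)).coeff k = 0 := fun k hk =>
        coeff_eq_zero_of_natDegree_lt (lt_of_le_of_lt (hdeg (m+1)) (by omega))
      have e1 : (C (m+1+3)).coeff (m+4) = 0 :=
        coeff_eq_zero_of_natDegree_lt (lt_of_le_of_lt (hdeg (m+4)) (by omega))
      have e2 : ((X ^ 4 + X ^ 3 + X ^ 2 + X : (ZMod 2)[X]) * C (m+1)).coeff (m+4) = 1 := by
        rw [add_mul, add_mul, add_mul, coeff_add, coeff_add, coeff_add]
        rw [show m + 4 = m + 4 from rfl]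
        rw [show ((X:(ZMod 2)[X])^4 * C (m+1)).coeff (m+4) = (C (m+1)).coeff m from by
              simpa using coeff_X_pow_mul (C (m+1)) 4 m,
            show ((X:(ZMod 2)[X])^3 * C (m+1)).coeff (m+4) = (C (m+1)).coeff (m+1) from by
              simpa [show m + 1 + 3 = m + 4 from by ring] using coeff_X_pow_mul (C (m+1)) 3 (m+1),
            show ((X:(ZMod 2)[X])^2 * C (m+1)).coeff (m+4) = (C (m+1)).coeff (m+2) from by
              simpa [show m + 2 + 2 = m + 4 from by ring] using coeff_X_pow_mul (C (m+1)) 2 (m+2),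
            show ((X:(ZMod 2)[X]) * C (m+1)).coeff (m+4) = (C (m+1)).coeff (m+3) from by
              simpa [show m + 3 + 1 = m + 4 from by ring, pow_one] using
                coeff_X_pow_mul (C (m+1)) 1 (m+3)]
        rw [hz (m+1) (by omega), hz (m+2) (by omega), hz (m+3) (by omega), key]
        ring
      have e3 : ((X : (ZMod 2)[X]) ^ (m+1) * (X ^ 2 + X)).coeff (m+4) = 0 := by
        rw [show m + 4 = 3 + (m+1) from by ring, coeff_X_pow_mul]
        simp [coeff_X, coeff_X_pow]
      rw [coeff_add, coeff_add, e1, e2, e3]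
      ring

theorem stmt8 (C : ℕ → Polynomial (ZMod 2))
    (hC0 : C 0 = 0) (hC1 : C 1 = 1) (hC2 : C 2 = X) (hC3 : C 3 = X ^ 2)
    (hrec : ∀ n, C (n + 4) = C (n + 3) + (X ^ 4 + X ^ 3 + X ^ 2 + X) * C n + X ^ n * (X ^ 2 + X)) :
    ∀ n : ℕ, C n ∈ Submodule.span (ZMod 2) (C '' Set.Iio n) → 4 ∣ n := by
  intro n hmem
  by_contra h4
  obtain ⟨m, rfl⟩ : ∃ m, n = m + 1 := ⟨n - 1, by omega⟩
  have htop : (C (m+1)).coeff m = 1 := top_aux C hC0 hC1 hC2 hC3 hrec m h4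
  have hsub : C '' Set.Iio (m+1) ⊆ (LinearMap.ker (lcoeff (ZMod 2) m) : Set ((ZMod 2)[X])) := by
    rintro p ⟨k, hk, rfl⟩
    simp only [Set.mem_Iio] at hk
    simp only [SetLike.mem_coe, LinearMap.mem_ker, lcoeff_apply]
    rcases Nat.eq_zero_or_pos k with h0 | hpos
    · subst h0; simp [hC0]
    · exact coeff_eq_zero_of_natDegree_lt
        (lt_of_le_of_lt (deg_aux C hC0 hC1 hC2 hC3 hrec k) (by omega))
  have := Submodule.span_le.mpr hsub hmem
  rw [LinearMap.mem_ker, lcoeff_apply, htop] at this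
  exact one_ne_zero this
end

section
/- Let α : Z/2[F] → Z/2[G] be the ring isomorphism taking F^n to G^n, and define T(f) = U(f) + α(f) for f in Z/2[F]. Then T maps Z/2[F] into Z/2[F]; moreover T(F^n) is a Z/2-linear combination of powers F^k with k ≤ n - 2 and k ≡ n (mod 2). In particular T takes 1, F, F^2, F^3 to 0, 0, 0, F respectively. -/
open Polynomial

noncomputable def Fp : Polynomial (ZMod 2) := X * (X + 1) ^ 3

noncomputable def Gp : Polynomial (ZMod 2) := X ^ 3 * (X + 1)

lemma aux_mul_span (c : Polynomial (ZMod 2)) {s t : Set (Polynomial (ZMod 2))}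
    (h : ∀ p ∈ s, c * p ∈ t) {a} (ha : a ∈ Submodule.span (ZMod 2) s) :
    c * a ∈ Submodule.span (ZMod 2) t := by
  have h2 : Submodule.map (LinearMap.mulLeft (ZMod 2) c) (Submodule.span (ZMod 2) s) ≤
      Submodule.span (ZMod 2) t := by
    rw [Submodule.map_span]
    apply Submodule.span_le.2
    rintro x ⟨p, hp, rfl⟩
    exact Submodule.subset_span (h p hp)
  exact h2 (Submodule.mem_map_of_mem ha)

theorem stmt12 (U : Polynomial (ZMod 2) →ₗ[ZMod 2] Polynomial (ZMod 2))
    (hsemi : ∀ f, U (Gp * f) = Fp * U f)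
    (h0 : U 1 = 1) (h1 : U X = X) (h2 : U (X ^ 2) = X ^ 2)
    (h3 : U (X ^ 3) = X ^ 3 + X ^ 2 + X) :
    (∀ n : ℕ, U (Fp ^ n) + Gp ^ n ∈
      Submodule.span (ZMod 2) {p | ∃ k : ℕ, k + 2 ≤ n ∧ k % 2 = n % 2 ∧ p = Fp ^ k}) ∧
    U 1 + 1 = 0 ∧ U Fp + Gp = 0 ∧ U (Fp ^ 2) + Gp ^ 2 = 0 ∧ U (Fp ^ 3) + Gp ^ 3 = Fp := by
  have h2p : (2 : Polynomial (ZMod 2)) = 0 := by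
    exact_mod_cast map_eq_zero_iff (C : ZMod 2 →+* _) C_injective |>.2 (by decide)
  have t0 : U (1 : Polynomial (ZMod 2)) + 1 = 0 := by
    rw [h0]; linear_combination h2p
  have hdF : Fp = Gp * 1 + (X ^ 2 + X) := by
    unfold Fp Gp; linear_combination (X ^ 3 + X ^ 2) * h2p
  have t1 : U Fp + Gp = 0 := by
    rw [congrArg U hdF, map_add, map_add, hsemi, h0, h2, h1]
    unfold Fp Gp; linear_combination (X ^ 4 + 2 * X ^ 3 + 2 * X ^ 2 + X) * h2p
  have hd4 : (X : Polynomial (ZMod 2)) ^ 4 = Gp * 1 + X ^ 3 := by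
    unfold Gp; linear_combination ((0 - X ^ 3)) * h2p
  have hd5 : (X : Polynomial (ZMod 2)) ^ 5 = Gp * X + X ^ 4 := by
    unfold Gp; linear_combination ((0 - X ^ 4)) * h2p
  have hd6 : (X : Polynomial (ZMod 2)) ^ 6 = Gp * X ^ 2 + X ^ 5 := by
    unfold Gp; linear_combination ((0 - X ^ 5)) * h2p
  have hd7 : (X : Polynomial (ZMod 2)) ^ 7 = Gp * X ^ 3 + X ^ 6 := by
    unfold Gp; linear_combination ((0 - X ^ 6)) * h2p
  have hd8 : (X : Polynomial (ZMod 2)) ^ 8 = Gp * X ^ 4 + X ^ 7 := by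
    unfold Gp; linear_combination ((0 - X ^ 7)) * h2p
  have hd9 : (X : Polynomial (ZMod 2)) ^ 9 = Gp * X ^ 5 + X ^ 8 := by
    unfold Gp; linear_combination ((0 - X ^ 8)) * h2p
  have hd10 : (X : Polynomial (ZMod 2)) ^ 10 = Gp * X ^ 6 + X ^ 9 := by
    unfold Gp; linear_combination ((0 - X ^ 9)) * h2p
  have hd11 : (X : Polynomial (ZMod 2)) ^ 11 = Gp * X ^ 7 + X ^ 10 := by
    unfold Gp; linear_combination ((0 - X ^ 10)) * h2p
  have hd12 : (X : Polynomial (ZMod 2)) ^ 12 = Gp * X ^ 8 + X ^ 11 := by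
    unfold Gp; linear_combination ((0 - X ^ 11)) * h2p
  have u4 : U ((X : Polynomial (ZMod 2)) ^ 4) = X ^ 4 := by
    rw [congrArg U hd4, map_add, hsemi, h0, h3]
    unfold Fp; linear_combination (2 * X ^ 3 + 2 * X ^ 2 + X) * h2p
  have u5 : U ((X : Polynomial (ZMod 2)) ^ 5) = X ^ 5 + X ^ 3 + X ^ 2 := by
    rw [congrArg U hd5, map_add, hsemi, h1, u4]
    unfold Fp; linear_combination (2 * X ^ 4 + X ^ 3) * h2p
  have u6 : U ((X : Polynomial (ZMod 2)) ^ 6) = X ^ 6 + X ^ 4 + X ^ 2 := by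
    rw [congrArg U hd6, map_add, hsemi, h2, u5]
    unfold Fp; linear_combination (2 * X ^ 5 + X ^ 4 + X ^ 3) * h2p
  have u7 : U ((X : Polynomial (ZMod 2)) ^ 7) = X ^ 7 + X ^ 6 + X ^ 5 := by
    rw [congrArg U hd7, map_add, hsemi, h3, u6]
    unfold Fp; linear_combination (2 * X ^ 6 + 3 * X ^ 5 + 4 * X ^ 4 + 2 * X ^ 3 + X ^ 2) * h2p
  have u8 : U ((X : Polynomial (ZMod 2)) ^ 8) = X ^ 8 := by
    rw [congrArg U hd8, map_add, hsemi, u4, u7]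
    unfold Fp; linear_combination (2 * X ^ 7 + 2 * X ^ 6 + X ^ 5) * h2p
  have u9 : U ((X : Polynomial (ZMod 2)) ^ 9) = X ^ 9 + X ^ 6 + X ^ 3 := by
    rw [congrArg U hd9, map_add, hsemi, u5, u8]
    unfold Fp; linear_combination (2 * X ^ 8 + 2 * X ^ 7 + 2 * X ^ 6 + 3 * X ^ 5 + 2 * X ^ 4) * h2p
  have u10 : U ((X : Polynomial (ZMod 2)) ^ 10) = X ^ 10 + X ^ 6 + X ^ 4 := by
    rw [congrArg U hd10, map_add, hsemi, u6, u9]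
    unfold Fp; linear_combination (2 * X ^ 9 + 2 * X ^ 8 + 2 * X ^ 7 + 2 * X ^ 6 + 2 * X ^ 5 + X ^ 4 + X ^ 3) * h2p
  have u11 : U ((X : Polynomial (ZMod 2)) ^ 11) = X ^ 11 + X ^ 10 + X ^ 9 + X ^ 8 + X ^ 4 := by
    rw [congrArg U hd11, map_add, hsemi, u7, u10]
    unfold Fp; linear_combination (2 * X ^ 10 + 3 * X ^ 9 + 3 * X ^ 8 + 2 * X ^ 7 + X ^ 6) * h2p
  have u12 : U ((X : Polynomial (ZMod 2)) ^ 12) = X ^ 12 + X ^ 8 + X ^ 4 := by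
    rw [congrArg U hd12, map_add, hsemi, u8, u11]
    unfold Fp; linear_combination (2 * X ^ 11 + 2 * X ^ 10 + X ^ 9) * h2p
  have hF2 : Fp ^ 2 = (X : Polynomial (ZMod 2)) ^ 8 + X ^ 6 + X ^ 4 + X ^ 2 := by
    unfold Fp; linear_combination (3 * X ^ 7 + 7 * X ^ 6 + 10 * X ^ 5 + 7 * X ^ 4 + 3 * X ^ 3) * h2p
  have hF3 : Fp ^ 3 = (X : Polynomial (ZMod 2)) ^ 12 + X ^ 11 + X ^ 4 + X ^ 3 := by
    unfold Fp; linear_combination (4 * X ^ 11 + 18 * X ^ 10 + 42 * X ^ 9 + 63 * X ^ 8 + 63 * X ^ 7 + 42 * X ^ 6 + 18 * X ^ 5 + 4 * X ^ 4) * h2p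
  have t2 : U (Fp ^ 2) + Gp ^ 2 = 0 := by
    rw [congrArg U hF2, map_add, map_add, map_add, u8, u6, u4, h2]
    unfold Gp; linear_combination (X ^ 8 + X ^ 7 + X ^ 6 + X ^ 4 + X ^ 2) * h2p
  have t3 : U (Fp ^ 3) + Gp ^ 3 = Fp := by
    rw [congrArg U hF3, map_add, map_add, map_add, u12, u11, u4, h3]
    unfold Fp Gp; linear_combination (X ^ 12 + 2 * X ^ 11 + 2 * X ^ 10 + X ^ 9 + X ^ 8 + X ^ 4 - X ^ 3 - X ^ 2) * h2p
  have hid : Gp ^ 4 = Fp ^ 4 + Fp * Gp := by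
    unfold Fp Gp; linear_combination ((0 - 4 * X ^ 15 - 30 * X ^ 14 - 108 * X ^ 13 - 247 * X ^ 12 - 396 * X ^ 11 - 462 * X ^ 10 - 396 * X ^ 9 - 248 * X ^ 8 - 112 * X ^ 7 - 36 * X ^ 6 - 8 * X ^ 5 - X ^ 4)) * h2p
  have hF4 : Fp ^ 4 = Gp * (Gp * (Gp * Gp)) + Gp * Fp := by
    unfold Fp Gp; linear_combination (4 * X ^ 15 + 30 * X ^ 14 + 108 * X ^ 13 + 247 * X ^ 12 + 396 * X ^ 11 + 462 * X ^ 10 + 396 * X ^ 9 + 247 * X ^ 8 + 108 * X ^ 7 + 30 * X ^ 6 + 4 * X ^ 5) * h2p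

  have ukey : ∀ n : ℕ, U (Fp ^ (n + 4)) = Fp ^ 4 * U (Fp ^ n) + Fp * U (Fp ^ (n + 1)) := by
    intro n
    have hdn : Fp ^ (n + 4) = Gp * (Gp * (Gp * (Gp * Fp ^ n))) + Gp * (Fp * Fp ^ n) := by
      have : Fp ^ (n + 4) = Fp ^ n * Fp ^ 4 := by ring
      rw [this, hF4]; ring
    rw [congrArg U hdn, map_add, hsemi, hsemi, hsemi, hsemi, hsemi]
    have : Fp * Fp ^ n = Fp ^ (n + 1) := by ring
    rw [this]; ring
  have key : ∀ n : ℕ, U (Fp ^ n) + Gp ^ n ∈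
      Submodule.span (ZMod 2) {p | ∃ k : ℕ, k + 2 ≤ n ∧ k % 2 = n % 2 ∧ p = Fp ^ k} := by
    intro n
    induction n using Nat.strong_induction_on with
    | _ n ih =>
      match n, ih with
      | 0, _ => 
        have hz : U (Fp ^ 0) + Gp ^ 0 = 0 := by simp only [pow_zero]; exact t0
        rw [hz]; exact zero_mem _
      | 1, _ =>
        have hz : U (Fp ^ 1) + Gp ^ 1 = 0 := by simp only [pow_one]; exact t1
        rw [hz]; exact zero_mem _
      | 2, _ =>
        rw [t2]; exact zero_mem _
      | 3, _ =>
        rw [t3]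
        exact Submodule.subset_span ⟨1, by omega, by omega, (pow_one Fp).symm⟩
      | (m + 4), ih =>
        have hm := ih m (by omega)
        have hm1 := ih (m + 1) (by omega)
        rw [ukey m]
        have hsplit : Fp ^ 4 * U (Fp ^ m) + Fp * U (Fp ^ (m + 1)) + Gp ^ (m + 4) =
            Fp ^ 4 * (U (Fp ^ m) + Gp ^ m) + Fp * (U (Fp ^ (m + 1)) + Gp ^ (m + 1)) := by
          linear_combination Gp ^ m * hid
        rw [hsplit]
        apply add_mem
        · refine aux_mul_span _ ?_ hm
          rintro p ⟨k, hk1, hk2, rfl⟩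
          exact ⟨k + 4, by omega, by omega, by rw [pow_add]; ring⟩
        · refine aux_mul_span _ ?_ hm1
          rintro p ⟨k, hk1, hk2, rfl⟩
          exact ⟨k + 1, by omega, by omega, by rw [pow_add]; ring⟩
  exact ⟨key, t0, t1, t2, t3⟩
end

section
/- For 0 ≤ i ≤ 2 and k ≥ 0, (U^2 + I)(F^i·G^k) = F^i·T(F^k), where T(f) = U(f) + α(f) on Z/2[F] and α(F^n) = G^n. -/
open Polynomial

theorem stmt14 (U : Polynomial (ZMod 2) →ₗ[ZMod 2] Polynomial (ZMod 2))
    (hsemi : ∀ f, U (Gp * f) = Fp * U f)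
    (h0 : U 1 = 1) (h1 : U X = X) (h2 : U (X ^ 2) = X ^ 2)
    (h3 : U (X ^ 3) = X ^ 3 + X ^ 2 + X) :
    ∀ i : ℕ, i ≤ 2 → ∀ k : ℕ,
      U (U (Fp ^ i * Gp ^ k)) + Fp ^ i * Gp ^ k = Fp ^ i * (U (Fp ^ k) + Gp ^ k) := by
  have h2' : (2 : (ZMod 2)[X]) = 0 := by
    exact_mod_cast CharP.cast_eq_zero ((ZMod 2)[X]) 2
  -- iterated semilinearity
  have semi : ∀ (k : ℕ) (f : (ZMod 2)[X]), U (Gp ^ k * f) = Fp ^ k * U f := by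
    intro k
    induction k with
    | zero => intro f; simp
    | succ n ih =>
      intro f
      rw [pow_succ, mul_assoc, ih, hsemi, pow_succ]
      ring
  have hUG : U Gp = Fp := by
    have := hsemi 1
    rw [mul_one, h0, mul_one] at this
    exact this
  have e1 : Fp = Gp * 1 + (X ^ 2 + X) := by
    unfold Fp Gp; linear_combination (X ^ 3 + X ^ 2) * h2'
  have e2 : Fp ^ 2 = Gp * (Gp + 1) + (X ^ 3 + X ^ 2) := by
    unfold Fp Gp; linear_combination (2*X^7+7*X^6+10*X^5+7*X^4+2*X^3) * h2'
  have hUF : U Fp = Gp := by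
    rw [e1, map_add, hsemi, h0, map_add, h2, h1, mul_one]
    unfold Fp Gp; linear_combination (X ^ 3 + 2 * X ^ 2 + X) * h2'
  have hUF2 : U (Fp ^ 2) = Gp ^ 2 := by
    rw [e2, map_add, hsemi, map_add, hUG, h0, map_add, h3, h2]
    unfold Fp Gp
    linear_combination (2*X^7+7*X^6+10*X^5+8*X^4+5*X^3+3*X^2+X) * h2'
  -- the key reduction: U (U (Fp^i * Gp^k)) = Fp^i * U (Fp^k) for i ≤ 2
  intro i hi k
  have step1 : U (Fp ^ i * Gp ^ k) = Fp ^ k * U (Fp ^ i) := by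
    rw [mul_comm, semi]
  have hUFi : U (Fp ^ i) = Gp ^ i := by
    interval_cases i
    · simpa using h0
    · simpa using hUF
    · exact hUF2
  have step2 : U (U (Fp ^ i * Gp ^ k)) = Fp ^ i * U (Fp ^ k) := by
    rw [step1, hUFi, mul_comm, semi]
  rw [step2, mul_add]
end
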